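/- Let k ≥ 2 be an integer and λ ∈ ℂ \ {0}. Suppose χ(ζ) = Σ_{m<0} b_m ζ^m and ψ(ζ) := λχ(ζ) − χ(ζ^k) = Σ_{m<0} c_m ζ^m are Laurent series (with only negative-index terms) both converging for all ζ ≠ 0 (i.e. defining holomorphic functions on ℂ \ {0} vanishing at ∞). If every nonzero coefficient c_m of ψ has index m not divisible by k, then ψ is identically zero. -/

import Mathlib

/-- A power series summing to 0 at every nonzero point, with zero constant term,
has all coefficients zero. -/
lemma coeff_zero_of_hasSum_zero (d : ℕ → ℂ)
    (h : ∀ w : ℂ, w ≠ 0 → HasSum (fun n => d n * w ^ n) 0) : ∀ n, d n = 0 := by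
  -- coefficients decay like C / 2^n
  have hs : Summable fun n => d n * (2 : ℂ) ^ n := (h 2 two_ne_zero).summable
  obtain ⟨C, hC1, hC⟩ : ∃ C : ℝ, 1 ≤ C ∧ ∀ n, ‖d n‖ * 2 ^ n ≤ C := by
    have ht : Filter.Tendsto (fun n => ‖d n * (2 : ℂ) ^ n‖) Filter.atTop (nhds 0) := by
      simpa using hs.tendsto_atTop_zero.norm
    obtain ⟨C, hC⟩ := ht.bddAbove_range
    refine ⟨max C 1, le_max_right _ _, fun n => ?_⟩
    have := hC (Set.mem_range_self n)
    simp only [norm_mul, norm_pow, Complex.norm_ofNat] at this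
    exact this.trans (le_max_left _ _)
  have hdn : ∀ n : ℕ, ‖d n‖ ≤ C / 2 ^ n := fun n => by
    rw [div_eq_inv_mul, ← mul_comm C]
    exact (le_div_iff₀ (by positivity)).mpr (hC n)
  intro n
  induction n using Nat.strong_induction_on with
  | _ n ih =>
  have key : ∀ t : ℝ, 0 < t → t ≤ 1 → ‖d n‖ ≤ C * t := by
    intro t ht ht1
    set w : ℂ := (t : ℂ) with hwdef
    have hw : w ≠ 0 := by
      simp only [hwdef, ne_eq, Complex.ofReal_eq_zero]
      exact ht.ne'
    have h1 : HasSum (fun j => d (j + n) * w ^ (j + n)) 0 := by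
      have hz : ∑ i ∈ Finset.range n, d i * w ^ i = 0 :=
        Finset.sum_eq_zero fun i hi => by rw [ih i (Finset.mem_range.mp hi), zero_mul]
      have := (hasSum_nat_add_iff (f := fun i => d i * w ^ i) n
        (g := (0 : ℂ))).mpr (by rw [hz, add_zero]; exact h w hw)
      exact this
    have h2 : HasSum (fun j => d (j + n) * w ^ j) 0 := by
      have he : (fun j : ℕ => d (j + n) * w ^ (j + n) * (w⁻¹) ^ n)
          = fun j : ℕ => d (j + n) * w ^ j := by
        funext j
        rw [pow_add]
        rw [mul_assoc, mul_assoc, ← mul_pow, mul_inv_cancel₀ hw, one_pow, mul_one]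
      have h2' := h1.mul_right ((w⁻¹) ^ n)
      rw [zero_mul] at h2'
      exact he ▸ h2'
    have h3 : HasSum (fun j : ℕ => d (j + 1 + n) * w ^ (j + 1)) (-(d n)) := by
      have := (hasSum_nat_add_iff (f := fun j => d (j + n) * w ^ j) 1
        (g := -(d n))).mpr (by simpa using h2)
      simpa [add_right_comm] using this
    have hbound : ∀ j : ℕ, ‖d (j + 1 + n) * w ^ (j + 1)‖ ≤ C * t * (1 / 2 : ℝ) ^ (j + 1) := by
      intro j
      rw [norm_mul, norm_pow]
      have hwt : ‖w‖ = t := by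
        rw [hwdef, Complex.norm_real, Real.norm_eq_abs, abs_of_pos ht]
      rw [hwt]
      have h4 : ‖d (j + 1 + n)‖ ≤ C * (1 / 2 : ℝ) ^ (j + 1) := by
        refine (hdn (j + 1 + n)).trans ?_
        rw [div_eq_mul_inv, ← one_div, ← one_div_pow]
        have h4' : ((1 : ℝ) / 2) ^ (j + 1 + n) ≤ (1 / 2 : ℝ) ^ (j + 1) :=
          pow_le_pow_of_le_one (by norm_num) (by norm_num) (by omega)
        nlinarith [h4', hC1]
      have h5 : t ^ (j + 1) ≤ t := by
        have h5' := pow_le_one₀ ht.le ht1 (n := j)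
        calc t ^ (j + 1) = t * t ^ j := by ring
        _ ≤ t * 1 := by nlinarith
        _ = t := mul_one t
      calc ‖d (j + 1 + n)‖ * t ^ (j + 1) ≤ (C * (1 / 2 : ℝ) ^ (j + 1)) * t :=
            mul_le_mul h4 h5 (by positivity) (by positivity)
        _ = C * t * (1 / 2 : ℝ) ^ (j + 1) := by ring
    have hgeos : Summable fun j : ℕ => ((1 : ℝ) / 2) ^ j :=
      summable_geometric_of_lt_one (by norm_num) (by norm_num)
    have hgs : Summable fun j : ℕ => C * t * (1 / 2 : ℝ) ^ (j + 1) :=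
      (((summable_nat_add_iff 1).mpr hgeos).mul_left _)
    have hns : Summable fun j : ℕ => ‖d (j + 1 + n) * w ^ (j + 1)‖ :=
      Summable.of_nonneg_of_le (fun j => norm_nonneg _) hbound hgs
    have hts : (∑' j : ℕ, C * t * (1 / 2 : ℝ) ^ (j + 1)) = C * t := by
      rw [tsum_mul_left]
      have hgeo : (∑' j : ℕ, ((1 : ℝ) / 2) ^ j) = 2 := by
        rw [tsum_geometric_of_lt_one (by norm_num) (by norm_num)]; norm_num
      have h6 := Summable.tsum_eq_zero_add hgeos
      rw [hgeo] at h6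
      simp only [pow_zero] at h6
      have : (∑' j : ℕ, ((1 : ℝ) / 2) ^ (j + 1)) = 1 := by linarith
      rw [this, mul_one]
    calc ‖d n‖ = ‖-(d n)‖ := (norm_neg _).symm
      _ = ‖∑' j : ℕ, d (j + 1 + n) * w ^ (j + 1)‖ := by rw [h3.tsum_eq]
      _ ≤ ∑' j : ℕ, ‖d (j + 1 + n) * w ^ (j + 1)‖ := norm_tsum_le_tsum_norm hns
      _ ≤ ∑' j : ℕ, C * t * (1 / 2 : ℝ) ^ (j + 1) := Summable.tsum_le_tsum hbound hns hgs
      _ = C * t := hts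
  have hle : ‖d n‖ ≤ 0 := by
    refine le_of_forall_pos_le_add fun ε hε => ?_
    have hC0 : 0 < C := lt_of_lt_of_le one_pos hC1
    have ht : 0 < min 1 (ε / C) := lt_min one_pos (by positivity)
    have hk := key (min 1 (ε / C)) ht (min_le_left _ _)
    have h7 : C * min 1 (ε / C) ≤ ε := by
      calc C * min 1 (ε / C) ≤ C * (ε / C) :=
            mul_le_mul_of_nonneg_left (min_le_right _ _) hC0.le
        _ = ε := by field_simp
    linarith
  simpa using hle.antisymm (norm_nonneg _)

/-- Laurent series with only negative-index terms summing to zero everywhere. -/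
lemma laurent_coeff_zero (a : ℤ → ℂ) (ha : ∀ m : ℤ, 0 ≤ m → a m = 0)
    (h : ∀ ζ : ℂ, ζ ≠ 0 → HasSum (fun m : ℤ => a m * ζ ^ m) 0) : ∀ m : ℤ, a m = 0 := by
  have key : ∀ n : ℕ, a (-(n : ℤ)) = 0 := by
    have hmain : ∀ w : ℂ, w ≠ 0 → HasSum (fun n : ℕ => a (-(n : ℤ)) * w ^ n) 0 := by
      intro w hw
      have hz : (w⁻¹ : ℂ) ≠ 0 := inv_ne_zero hw
      have h1 := h w⁻¹ hz
      have hinj : Function.Injective fun n : ℕ => -(n : ℤ) := by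
        intro p q hpq
        simpa using hpq
      have hcond : ∀ m : ℤ, m ∉ Set.range (fun n : ℕ => -(n : ℤ)) →
          a m * (w⁻¹) ^ m = 0 := by
        intro m hm
        rcases le_or_gt 0 m with h0 | h0
        · rw [ha m h0, zero_mul]
        · exact absurd ⟨(-m).toNat, by simp [Int.toNat_of_nonneg (neg_nonneg.mpr h0.le)]⟩ hm
      have h2 := (hinj.hasSum_iff hcond).mpr h1
      have he : (fun n : ℕ => a (-(n : ℤ)) * (w⁻¹) ^ (-(n : ℤ)))
          = fun n : ℕ => a (-(n : ℤ)) * w ^ n := by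
        funext n
        rw [zpow_neg, zpow_natCast, inv_pow, inv_inv]
      exact he ▸ h2
    exact coeff_zero_of_hasSum_zero _ hmain
  intro m
  rcases le_or_gt 0 m with h0 | h0
  · exact ha m h0
  · have := key m.natAbs
    rwa [Int.ofNat_natAbs_of_nonpos h0.le, neg_neg] at this

/-- Normal-form uniqueness (Section 4): let `χ(ζ) = Σ_{m<0} b_m ζ^m` and
`ψ(ζ) = λχ(ζ) − χ(ζ^k) = Σ_{m<0} c_m ζ^m` be Laurent series with only negative-index
terms, both converging on all of `ℂ \ {0}`. If every nonzero coefficient `c_m` has index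
`m` not divisible by `k`, then `ψ` is identically zero. -/
theorem normal_form_unique (k : ℕ) (hk : 2 ≤ k) (lam : ℂ) (hlam : lam ≠ 0)
    (b c : ℤ → ℂ) (hbneg : ∀ m : ℤ, 0 ≤ m → b m = 0) (hcneg : ∀ m : ℤ, 0 ≤ m → c m = 0)
    (χ ψ : ℂ → ℂ)
    (hχ : ∀ ζ : ℂ, ζ ≠ 0 → HasSum (fun m : ℤ => b m * ζ ^ m) (χ ζ))
    (hψ : ∀ ζ : ℂ, ζ ≠ 0 → HasSum (fun m : ℤ => c m * ζ ^ m) (ψ ζ))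
    (heq : ∀ ζ : ℂ, ζ ≠ 0 → ψ ζ = lam * χ ζ - χ (ζ ^ k))
    (hc : ∀ m : ℤ, c m ≠ 0 → ¬ ((k:ℤ) ∣ m)) :
    ∀ ζ : ℂ, ζ ≠ 0 → ψ ζ = 0 := by
  have hkpos : 0 < k := by omega
  have hkz : (k : ℤ) ≠ 0 := by exact_mod_cast hkpos.ne'
  -- Step 1: the coefficient recursion b r = lam * b (k * r)
  have hrec : ∀ r : ℤ, b r = lam * b ((k : ℤ) * r) := by
    have hkey : ∀ m : ℤ,
        lam * b m - (if (k : ℤ) ∣ m then b (m / k) else 0) - c m = 0 := by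
      apply laurent_coeff_zero
      · intro m hm
        have h1 : b (m / k) = 0 := hbneg _ (Int.ediv_nonneg hm (by positivity))
        simp [hbneg m hm, hcneg m hm, h1]
      · intro ζ hζ
        have hζk : (ζ : ℂ) ^ k ≠ 0 := pow_ne_zero _ hζ
        have h1 := hχ ζ hζ
        have h2 := hχ (ζ ^ k) hζk
        have h3 := hψ ζ hζ
        -- reindex h2 along m ↦ k * m
        have hinj : Function.Injective fun r : ℤ => (k : ℤ) * r := fun p q hpq =>
          mul_left_cancel₀ hkz hpq
        have hcond : ∀ m : ℤ, m ∉ Set.range (fun r : ℤ => (k : ℤ) * r) →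
            (if (k : ℤ) ∣ m then b (m / k) else 0) * ζ ^ m = 0 := by
          intro m hm
          rw [if_neg, zero_mul]
          rintro ⟨r, hr⟩
          exact hm ⟨r, hr.symm⟩
        have he : (fun r : ℤ => (if (k : ℤ) ∣ (k : ℤ) * r then b (((k:ℤ) * r) / k) else 0)
            * ζ ^ ((k : ℤ) * r)) = fun r : ℤ => b r * (ζ ^ k) ^ r := by
          funext r
          rw [if_pos ⟨r, rfl⟩, Int.mul_ediv_cancel_left r hkz, zpow_mul, zpow_natCast]
        have h2' : HasSum (fun m : ℤ => (if (k : ℤ) ∣ m then b (m / k) else 0) * ζ ^ m)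
            (χ (ζ ^ k)) := by
          apply (hinj.hasSum_iff hcond).mp
          simp only [Function.comp_def]
          rw [he]
          exact h2
        have hsum := ((h1.mul_left lam).sub h2').sub h3
        rw [heq ζ hζ, sub_self] at hsum
        have he2 : (fun m : ℤ => lam * (b m * ζ ^ m)
              - (if (k : ℤ) ∣ m then b (m / k) else 0) * ζ ^ m - c m * ζ ^ m)
            = fun m : ℤ =>
              (lam * b m - (if (k : ℤ) ∣ m then b (m / k) else 0) - c m) * ζ ^ m := by
          funext m
          ring
        exact he2 ▸ hsum
    intro r
    have h8 := hkey ((k : ℤ) * r)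
    have hcz : c ((k : ℤ) * r) = 0 := by
      by_contra hne
      exact hc _ hne ⟨r, rfl⟩
    rw [if_pos ⟨r, rfl⟩, Int.mul_ediv_cancel_left r hkz, hcz, sub_zero, sub_eq_zero] at h8
    exact h8.symm
  -- Step 2: iterate the recursion
  have hiter : ∀ (m : ℤ) (n : ℕ), b m = lam ^ n * b ((k : ℤ) ^ n * m) := by
    intro m n
    induction n generalizing m with
    | zero => simp
    | succ n ihn =>
      rw [ihn m, hrec ((k : ℤ) ^ n * m),
        show (k : ℤ) * ((k : ℤ) ^ n * m) = (k : ℤ) ^ (n + 1) * m by ring]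
      ring
  -- Step 3: the decay of coefficients forces b = 0
  have hbz : ∀ m : ℤ, b m = 0 := by
    set R : ℝ := ‖lam‖ + 2 with hRdef
    have hR1 : 1 < R := by
      have := norm_nonneg lam
      rw [hRdef]; linarith
    have hR0 : 0 < R := lt_trans one_pos hR1
    have hRC : ((R : ℂ)) ≠ 0 := by exact_mod_cast hR0.ne'
    have hζR : ((R : ℂ))⁻¹ ≠ 0 := inv_ne_zero hRC
    have hsummable := (hχ _ hζR).summable
    have hnorm : Summable fun j : ℤ => ‖b j * ((R : ℂ))⁻¹ ^ j‖ :=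
      summable_norm_iff.mpr hsummable
    set C : ℝ := ∑' j : ℤ, ‖b j * ((R : ℂ))⁻¹ ^ j‖ with hCdef
    have hC0 : 0 ≤ C := tsum_nonneg fun _ => norm_nonneg _
    have hCb : ∀ j : ℤ, ‖b j‖ ≤ C * R ^ j := by
      intro j
      have h1 : ‖b j * ((R : ℂ))⁻¹ ^ j‖ ≤ C := Summable.le_tsum hnorm j fun _ _ => norm_nonneg _
      have h2 : ‖((R : ℂ))⁻¹ ^ j‖ = (R ^ j)⁻¹ := by
        rw [norm_zpow, norm_inv, Complex.norm_real, Real.norm_eq_abs, abs_of_pos hR0,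
          inv_zpow]
      rw [norm_mul, h2, ← div_eq_mul_inv, div_le_iff₀ (zpow_pos hR0 j)] at h1
      linarith
    intro m
    rcases le_or_gt 0 m with h0 | h0
    · exact hbneg m h0
    · have hm1 : m ≤ -1 := by omega
      have hq1 : ‖lam‖ / R < 1 := (div_lt_one hR0).mpr (by rw [hRdef]; linarith)
      have hq0 : 0 ≤ ‖lam‖ / R := div_nonneg (norm_nonneg _) hR0.le
      have hstep : ∀ n : ℕ, ‖b m‖ ≤ C / R * (‖lam‖ / R) ^ n := by
        intro n
        have hkn : ((k : ℤ) ^ n * m) ≤ -((n : ℤ) + 1) := by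
          have h3 : (n : ℤ) < (k : ℤ) ^ n := by
            exact_mod_cast Nat.lt_pow_self (n := n) (by omega : 1 < k)
          nlinarith [h3, hm1]
        have h4 : R ^ ((k : ℤ) ^ n * m) ≤ R ^ (-((n : ℤ) + 1)) :=
          zpow_le_zpow_right₀ hR1.le hkn
        have h5 : ‖b m‖ = ‖lam‖ ^ n * ‖b ((k : ℤ) ^ n * m)‖ := by
          rw [hiter m n, norm_mul, norm_pow]
        have h6 : ‖b ((k : ℤ) ^ n * m)‖ ≤ C * R ^ (-((n : ℤ) + 1)) :=
          (hCb _).trans (mul_le_mul_of_nonneg_left h4 hC0)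
        have h7 : R ^ (-((n : ℤ) + 1)) = (R ^ (n + 1))⁻¹ := by
          rw [← zpow_natCast R (n + 1), ← zpow_neg]
          norm_num
        rw [h5]
        calc ‖lam‖ ^ n * ‖b ((k : ℤ) ^ n * m)‖
            ≤ ‖lam‖ ^ n * (C * (R ^ (n + 1))⁻¹) := by
              rw [← h7]
              exact mul_le_mul_of_nonneg_left h6 (pow_nonneg (norm_nonneg _) n)
          _ = C / R * (‖lam‖ / R) ^ n := by
              rw [pow_succ]
              ring
      have htend : Filter.Tendsto (fun n : ℕ => C / R * (‖lam‖ / R) ^ n)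
          Filter.atTop (nhds 0) := by
        have := (tendsto_pow_atTop_nhds_zero_of_lt_one hq0 hq1).const_mul (C / R)
        simpa using this
      have : ‖b m‖ ≤ 0 := ge_of_tendsto' htend hstep
      simpa using this.antisymm (norm_nonneg _)
  -- Conclusion
  have hχ0 : ∀ z : ℂ, z ≠ 0 → χ z = 0 := by
    intro z hz
    have h1 := hχ z hz
    simp only [hbz, zero_mul] at h1
    exact h1.unique hasSum_zero
  intro ζ hζ
  rw [heq ζ hζ, hχ0 ζ hζ, hχ0 _ (pow_ne_zero _ hζ), mul_zero, sub_zero]
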